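/- For all z₁, z₂ ∈ [z̄ − U/2, z̄ + U/2], if the two quantizations use independent dithers ν₁, ν₂, each uniform on (−Δ/2, Δ/2), then the quantization errors are uncorrelated: (1/Δ²)·∫_{−Δ/2}^{Δ/2} ∫_{−Δ/2}^{Δ/2} ( z₁ − (q(z₁ + ν₁) − ν₁) )·( z₂ − (q(z₂ + ν₂) − ν₂) ) dν₁ dν₂ = 0. -/

import Mathlib

open MeasureTheory intervalIntegral

/-- The uniform quantizer with midpoint `zbar` and step size `Δ`:
`q w = z̄ + sgn(w - z̄) * Δ * ⌊|w - z̄|/Δ + 1/2⌋`. -/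
noncomputable def uniformQuantizer (zbar Δ w : ℝ) : ℝ :=
  zbar + Real.sign (w - zbar) * Δ * (⌊|w - zbar| / Δ + 1 / 2⌋ : ℤ)

/-- `Int.fract` is periodic with period 1. -/
lemma fract_periodic : Function.Periodic (Int.fract : ℝ → ℝ) 1 := fun x => by
  simpa using Int.fract_add_int x 1

/-- Integral of `fract` over `[0,1]` is `1/2`. -/
lemma integral_fract_zero_one : ∫ t in (0:ℝ)..1, Int.fract t = 1 / 2 := by
  have h : ∫ t in (0:ℝ)..1, Int.fract t = ∫ t in (0:ℝ)..1, t := by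
    apply intervalIntegral.integral_congr_ae
    have h1 : (volume : Measure ℝ) {(1:ℝ)} = 0 := measure_singleton 1
    filter_upwards [measure_eq_zero_iff_ae_notMem.mp h1] with t ht htI
    rw [Set.uIoc_of_le (by norm_num : (0:ℝ) ≤ 1)] at htI
    have ht1 : t ≠ 1 := by simpa using ht
    have h0 : (0:ℝ) ≤ t := le_of_lt htI.1
    have h2 : t < 1 := lt_of_le_of_ne htI.2 ht1
    exact Int.fract_eq_self.mpr ⟨h0, h2⟩
  rw [h, integral_id]; norm_num

/-- Integral of `fract` over any interval of length 1 is `1/2`. -/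
lemma integral_fract_period (s : ℝ) : ∫ t in s..(s + 1), Int.fract t = 1 / 2 := by
  have := fract_periodic.intervalIntegral_add_eq s 0
  rw [this, zero_add, integral_fract_zero_one]

/-- Pointwise identity off a countable bad set. -/
lemma quantizer_error_eq (zbar Δ : ℝ) (hΔ : 0 < Δ) (w : ℝ)
    (h : Int.fract (w / Δ + 1 / 2) ≠ 0) :
    (zbar + w) - uniformQuantizer zbar Δ (zbar + w)
      = Δ * Int.fract (w / Δ + 1 / 2) - Δ / 2 := by
  set a : ℝ := w / Δ + 1 / 2 with ha
  have hfa : (⌊a⌋ : ℝ) = a - Int.fract a := by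
    rw [Int.fract]; ring
  have key : Real.sign w * Δ * (⌊|w| / Δ + 1 / 2⌋ : ℤ) = Δ * (⌊a⌋ : ℝ) := by
    rcases lt_trichotomy w 0 with hw | hw | hw
    · rw [Real.sign_of_neg hw, abs_of_neg hw]
      have h1 : -w / Δ + 1 / 2 = -a + 1 := by rw [ha]; ring
      rw [h1]
      have h2 : ⌊-a + (1:ℤ)⌋ = ⌊-a⌋ + 1 := Int.floor_add_intCast (-a) 1
      have h2' : ⌊-a + (1:ℝ)⌋ = ⌊-a⌋ + 1 := by exact_mod_cast h2
      rw [h2', Int.floor_neg]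
      have h3 : (⌈a⌉ : ℝ) = a + 1 - Int.fract a := Int.ceil_eq_add_one_sub_fract h
      push_cast
      rw [h3, hfa]
      ring
    · subst hw
      have ha0 : a = 1 / 2 := by rw [ha]; simp
      have hfl : ⌊a⌋ = 0 := by rw [ha0]; norm_num
      simp [Real.sign_zero, hfl]
    · rw [Real.sign_of_pos hw, abs_of_pos hw, ← ha, hfa]
      ring
  unfold uniformQuantizer
  rw [show zbar + w - zbar = w by ring, key, hfa]
  have hw : w = Δ * (a - 1 / 2) := by rw [ha]; field_simp; ring
  rw [hw]; ring

/-- Integrability of the fract composition. -/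
lemma fract_comp_integrable (c Δ a b : ℝ) (hΔ : 0 < Δ) :
    IntervalIntegrable (fun ν => Int.fract ((ν + c) / Δ + 1 / 2)) volume a b := by
  have h1 : IntervalIntegrable (fun ν : ℝ => (ν + c) / Δ + 1 / 2) volume a b :=
    (Continuous.intervalIntegrable (by continuity) a b)
  have h2 : IntervalIntegrable (fun ν : ℝ => (⌊(ν + c) / Δ + 1 / 2⌋ : ℝ)) volume a b := by
    apply Monotone.intervalIntegrable
    intro x y hxy
    have : (x + c) / Δ + 1 / 2 ≤ (y + c) / Δ + 1 / 2 := by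
      gcongr
    exact Int.cast_le.mpr (Int.floor_le_floor this)
  have h3 := h1.sub h2
  simp only [← Int.self_sub_floor] ; exact h3

/-- The mean of the dithered quantization error is zero. -/
lemma err_integral_zero (zbar Δ : ℝ) (hΔ : 0 < Δ) (z : ℝ) :
    ∫ ν in (-Δ / 2)..(Δ / 2), (z - (uniformQuantizer zbar Δ (z + ν) - ν)) = 0 := by
  set c : ℝ := z - zbar with hc
  -- a.e. rewrite to the fract form
  have hae : ∫ ν in (-Δ / 2)..(Δ / 2), (z - (uniformQuantizer zbar Δ (z + ν) - ν))
      = ∫ ν in (-Δ / 2)..(Δ / 2), (Δ * Int.fract ((ν + c) / Δ + 1 / 2) - Δ / 2) := by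
    apply intervalIntegral.integral_congr_ae
    have hS : (volume : Measure ℝ)
        {ν : ℝ | Int.fract ((ν + c) / Δ + 1 / 2) = 0} = 0 := by
      refine measure_mono_null ?_
        (measure_iUnion_null fun k : ℤ => measure_singleton (Δ * ((k : ℝ) - 1 / 2) - c))
      intro ν hν
      simp only [Set.mem_setOf_eq, ← Int.self_sub_floor] at hν
      refine Set.mem_iUnion.mpr ⟨⌊(ν + c) / Δ + 1 / 2⌋, ?_⟩
      simp only [Set.mem_singleton_iff]
      have h3 : (ν + c) / Δ = (⌊(ν + c) / Δ + 1 / 2⌋ : ℝ) - 1 / 2 := by linarith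
      have h4 := (div_eq_iff (ne_of_gt hΔ)).mp h3
      rw [mul_comm] at h4
      linarith
    filter_upwards [measure_eq_zero_iff_ae_notMem.mp hS] with ν hν _
    have hne : Int.fract ((ν + c) / Δ + 1 / 2) ≠ 0 := by simpa using hν
    have := quantizer_error_eq zbar Δ hΔ (ν + c) hne
    rw [show zbar + (ν + c) = z + ν by rw [hc]; ring] at this
    have h3 : z - (uniformQuantizer zbar Δ (z + ν) - ν)
        = (z + ν) - uniformQuantizer zbar Δ (z + ν) := by ring
    rw [h3, this]
  rw [hae]
  have hΔne : Δ ≠ 0 := ne_of_gt hΔ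
  have hint : IntervalIntegrable (fun ν => Int.fract ((ν + c) / Δ + 1 / 2)) volume
      (-Δ / 2) (Δ / 2) := fract_comp_integrable c Δ _ _ hΔ
  have hsplit : ∫ ν in (-Δ / 2)..(Δ / 2), (Δ * Int.fract ((ν + c) / Δ + 1 / 2) - Δ / 2)
      = Δ * (∫ ν in (-Δ / 2)..(Δ / 2), Int.fract ((ν + c) / Δ + 1 / 2))
        - (Δ / 2 - -Δ / 2) • (Δ / 2) := by
    rw [intervalIntegral.integral_sub ((hint.const_mul Δ)) (intervalIntegrable_const),
      intervalIntegral.integral_const_mul, intervalIntegral.integral_const]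
  rw [hsplit]
  -- change variables
  have h1 : ∫ ν in (-Δ / 2)..(Δ / 2), Int.fract ((ν + c) / Δ + 1 / 2)
      = ∫ u in (-Δ / 2 + c)..(Δ / 2 + c), Int.fract (u / Δ + 1 / 2) :=
    intervalIntegral.integral_comp_add_right (fun u => Int.fract (u / Δ + 1 / 2)) c
  have h2 : ∫ u in (-Δ / 2 + c)..(Δ / 2 + c), Int.fract (u / Δ + 1 / 2)
      = Δ • ∫ t in ((-Δ / 2 + c) / Δ)..((Δ / 2 + c) / Δ), Int.fract (t + 1 / 2) :=
    intervalIntegral.integral_comp_div (fun t => Int.fract (t + 1 / 2)) hΔne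
  have h3 : ∫ t in ((-Δ / 2 + c) / Δ)..((Δ / 2 + c) / Δ), Int.fract (t + 1 / 2)
      = ∫ s in ((-Δ / 2 + c) / Δ + 1 / 2)..((Δ / 2 + c) / Δ + 1 / 2), Int.fract s :=
    intervalIntegral.integral_comp_add_right Int.fract (1 / 2)
  have h4 : ((Δ / 2 + c) / Δ + 1 / 2 : ℝ) = ((-Δ / 2 + c) / Δ + 1 / 2) + 1 := by
    field_simp; ring
  rw [h1, h2, h3, h4, integral_fract_period]
  simp only [smul_eq_mul]
  ring

/-- Quantization errors from independent dithers are uncorrelated: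
for `z₁, z₂ ∈ [z̄ - U/2, z̄ + U/2]` and independent dithers `ν₁, ν₂`, each uniform on
`(-Δ/2, Δ/2)`,
`(1/Δ²) ∫∫ (z₁ - (q(z₁+ν₁) - ν₁)) * (z₂ - (q(z₂+ν₂) - ν₂)) dν₁ dν₂ = 0`. -/
theorem dithered_quantizer_errors_uncorrelated
    (n : ℕ) (hn : 1 ≤ n) (U : ℝ) (hU : 0 < U) (zbar : ℝ)
    (Δ : ℝ) (hΔ : Δ = U / (2 ^ n - 1)) :
    ∀ z₁ ∈ Set.Icc (zbar - U / 2) (zbar + U / 2),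
      ∀ z₂ ∈ Set.Icc (zbar - U / 2) (zbar + U / 2),
        (1 / Δ ^ 2) * ∫ ν₁ in (-Δ / 2)..(Δ / 2), ∫ ν₂ in (-Δ / 2)..(Δ / 2),
          (z₁ - (uniformQuantizer zbar Δ (z₁ + ν₁) - ν₁)) *
            (z₂ - (uniformQuantizer zbar Δ (z₂ + ν₂) - ν₂)) = 0 := by
  intro z₁ _ z₂ _
  have hΔpos : 0 < Δ := by
    rw [hΔ]
    apply div_pos hU
    have : (2:ℝ) ^ 1 ≤ 2 ^ n := pow_le_pow_right₀ (by norm_num) hn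
    norm_num at this ⊢; linarith
  have hinner : ∀ ν₁ : ℝ, (∫ ν₂ in (-Δ / 2)..(Δ / 2),
      (z₁ - (uniformQuantizer zbar Δ (z₁ + ν₁) - ν₁)) *
        (z₂ - (uniformQuantizer zbar Δ (z₂ + ν₂) - ν₂))) = 0 := by
    intro ν₁
    rw [intervalIntegral.integral_const_mul, err_integral_zero zbar Δ hΔpos z₂, mul_zero]
  simp only [hinner, intervalIntegral.integral_zero, mul_zero]
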